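/- Let g be a unimodular real Lie algebra of dimension 2n endowed with an Abelian linear D-complex structure g = g⁺ ⊕ g⁻. Then the Chevalley–Eilenberg differential vanishes on forms of type (n,0) and of type (0,n): if α ∈ Λ^n g* satisfies α(x_1,…,x_n) = 0 whenever at least one x_i lies in g⁻, then dα = 0; and likewise if α(x_1,…,x_n) = 0 whenever at least one x_i lies in g⁺, then dα = 0. -/

import Mathlib

open scoped BigOperators

noncomputable section ChevalleyEilenberg

variable (g : Type*) [LieRing g] [LieAlgebra ℝ g]

/-- The Chevalley–Eilenberg differential of an alternating `k`-form on a real Lie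
algebra, as a function on `(k+1)`-tuples:
`(dα)(x_0,…,x_k) = Σ_{i<j} (−1)^{i+j} α([x_i,x_j], x_0,…,x̂_i,…,x̂_j,…,x_k)`. -/
def ceD : {k : ℕ} → AlternatingMap ℝ g ℝ (Fin k) → ((Fin (k + 1) → g) → ℝ)
  | 0, _ => 0
  | (k + 1), α => fun x =>
      ∑ i : Fin (k + 2), ∑ j : Fin (k + 2),
        if hij : (i : ℕ) < (j : ℕ) then
          (-1 : ℝ) ^ ((i : ℕ) + (j : ℕ)) *
            α (fun m : Fin (k + 1) =>
                if hm : (m : ℕ) = 0 then ⁅x i, x j⁆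
                else
                  x (j.succAbove
                      ((⟨(i : ℕ), by omega⟩ : Fin (k + 1)).succAbove
                        (⟨(m : ℕ) - 1, by omega⟩ : Fin k))))
        else 0

theorem ceD_zero {k : ℕ} : ceD g (0 : AlternatingMap ℝ g ℝ (Fin k)) = 0 := by
  cases k with
  | zero => rfl
  | succ k => funext x; simp [ceD]

theorem ceD_add {k : ℕ} (α β : AlternatingMap ℝ g ℝ (Fin k)) :
    ceD g (α + β) = ceD g α + ceD g β := by
  cases k with
  | zero => funext x; simp [ceD]
  | succ k =>
    funext x
    simp only [ceD, Pi.add_apply, AlternatingMap.add_apply]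
    rw [← Finset.sum_add_distrib]
    refine Finset.sum_congr rfl fun i _ => ?_
    rw [← Finset.sum_add_distrib]
    refine Finset.sum_congr rfl fun j _ => ?_
    split
    · ring
    · ring

theorem ceD_smul {k : ℕ} (c : ℝ) (α : AlternatingMap ℝ g ℝ (Fin k)) :
    ceD g (c • α) = c • ceD g α := by
  cases k with
  | zero => funext x; simp [ceD]
  | succ k =>
    funext x
    simp only [ceD, Pi.smul_apply, AlternatingMap.smul_apply, smul_eq_mul,
      Finset.mul_sum]
    refine Finset.sum_congr rfl fun i _ => ?_
    refine Finset.sum_congr rfl fun j _ => ?_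
    split
    · ring
    · ring

/-- The space of `d`-closed `k`-forms. -/
def Zsub (k : ℕ) : Submodule ℝ (AlternatingMap ℝ g ℝ (Fin k)) where
  carrier := {α | ceD g α = 0}
  add_mem' := by
    intro a b ha hb
    simp only [Set.mem_setOf_eq] at *
    rw [ceD_add, ha, hb, add_zero]
  zero_mem' := by
    simpa only [Set.mem_setOf_eq] using ceD_zero g
  smul_mem' := by
    intro c a ha
    simp only [Set.mem_setOf_eq] at *
    rw [ceD_smul, ha, smul_zero]

/-- The space of `d`-exact `k`-forms. -/
def Bsub : (k : ℕ) → Submodule ℝ (AlternatingMap ℝ g ℝ (Fin k))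
  | 0 => ⊥
  | (k + 1) =>
    { carrier := {α | ∃ β : AlternatingMap ℝ g ℝ (Fin k), ceD g β = ⇑α}
      add_mem' := by
        rintro a b ⟨βa, hβa⟩ ⟨βb, hβb⟩
        exact ⟨βa + βb, by rw [ceD_add, hβa, hβb]; ext x; simp⟩
      zero_mem' := ⟨0, by rw [ceD_zero]; ext x; simp⟩
      smul_mem' := by
        rintro c a ⟨β, hβ⟩
        exact ⟨c • β, by rw [ceD_smul, hβ]; rfl⟩ }

/-- The `k`-th Lie algebra cohomology `H^k(g;ℝ) = ker d / im d`. -/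
abbrev Hcoh (k : ℕ) : Type _ :=
  @HasQuotient.Quotient ↥(Zsub g k) (Submodule ℝ ↥(Zsub g k))
    (@Submodule.hasQuotient ℝ ↥(Zsub g k) Real.instRing (Zsub g k).addCommGroup (Zsub g k).module)
    ((Bsub g k).comap (Zsub g k).subtype)

/-- The cohomology class of a `d`-closed `k`-form. -/
def cls {k : ℕ} (α : AlternatingMap ℝ g ℝ (Fin k)) (hα : ceD g α = 0) : Hcoh g k :=
  Submodule.Quotient.mk (⟨α, hα⟩ : Zsub g k)

/-- The subgroup `H^{k+}_K(g;ℝ)` of classes admitting a `d`-closed `K`-invariant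
representative.  (The set of such classes is a linear subspace, so taking its span
does not enlarge it.) -/
def Hplus (K : g →ₗ[ℝ] g) (k : ℕ) : Submodule ℝ (Hcoh g k) :=
  Submodule.span ℝ
    {c | ∃ (α : AlternatingMap ℝ g ℝ (Fin k)) (hα : ceD g α = 0),
        α.compLinearMap K = α ∧ c = cls g α hα}

/-- The subgroup `H^{k−}_K(g;ℝ)` of classes admitting a `d`-closed
`K`-anti-invariant representative. -/
def Hminus (K : g →ₗ[ℝ] g) (k : ℕ) : Submodule ℝ (Hcoh g k) :=
  Submodule.span ℝ
    {c | ∃ (α : AlternatingMap ℝ g ℝ (Fin k)) (hα : ceD g α = 0),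
        α.compLinearMap K = -α ∧ c = cls g α hα}

/-- The wedge product of `k` linear functionals, as an alternating `k`-form. -/
def wedge {k : ℕ} (fs : Fin k → (g →ₗ[ℝ] ℝ)) :
    AlternatingMap ℝ g ℝ (Fin k) :=
  MultilinearMap.alternatization
    ((MultilinearMap.mkPiAlgebra ℝ (Fin k) ℝ).compLinearMap fs)

end ChevalleyEilenberg

noncomputable section

section Aux

open Function Module

theorem sA_val {m : ℕ} (p : Fin (m+1)) (t : Fin m) :
    ((p.succAbove t : Fin (m+1)) : ℕ) = if (t:ℕ) < (p:ℕ) then (t:ℕ) else (t:ℕ)+1 := by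
  rcases lt_or_ge (t.castSucc) p with h | h
  · rw [Fin.succAbove_of_castSucc_lt _ _ h]
    simp only [Fin.lt_def, Fin.coe_castSucc] at h ⊢
    rw [if_pos h]
  · rw [Fin.succAbove_of_le_castSucc _ _ h]
    simp only [Fin.le_def, Fin.coe_castSucc, Fin.val_succ] at h ⊢
    rw [if_neg (by omega)]

/-- The index map selecting the slots other than `i` and `j`. -/
def Eix {k : ℕ} (i j : Fin (k+2)) (h : (i:ℕ) < (j:ℕ)) : Fin k → Fin (k+2) :=
  fun r => j.succAbove ((⟨(i:ℕ), by omega⟩ : Fin (k+1)).succAbove r)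

theorem Eix_val {k : ℕ} (i j : Fin (k+2)) (h : (i:ℕ) < (j:ℕ)) (r : Fin k) :
    (Eix i j h r : ℕ) =
      if (r:ℕ) < (i:ℕ) then (r:ℕ) else if (r:ℕ)+1 < (j:ℕ) then (r:ℕ)+1 else (r:ℕ)+2 := by
  unfold Eix
  rw [sA_val, sA_val]
  have hj := j.isLt
  split_ifs <;> simp_all <;> omega

theorem Eix_ne_left {k : ℕ} (i j : Fin (k+2)) (h : (i:ℕ) < (j:ℕ)) (r : Fin k) :
    Eix i j h r ≠ i := by
  refine Fin.ne_of_val_ne ?_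
  rw [Eix_val]
  split_ifs <;> omega

theorem Eix_ne_right {k : ℕ} (i j : Fin (k+2)) (h : (i:ℕ) < (j:ℕ)) (r : Fin k) :
    Eix i j h r ≠ j := by
  refine Fin.ne_of_val_ne ?_
  rw [Eix_val]
  split_ifs <;> omega

theorem Eix_injective {k : ℕ} (i j : Fin (k+2)) (h : (i:ℕ) < (j:ℕ)) :
    Function.Injective (Eix i j h) := by
  intro a b hab
  have hv := congrArg Fin.val hab
  rw [Eix_val, Eix_val] at hv
  refine Fin.ext ?_
  split_ifs at hv <;> omega

theorem Eix_surj {k : ℕ} (i j : Fin (k+2)) (h : (i:ℕ) < (j:ℕ)) (s : Fin (k+2))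
    (hsi : s ≠ i) (hsj : s ≠ j) : ∃ r : Fin k, Eix i j h r = s := by
  have hvi : (s:ℕ) ≠ (i:ℕ) := fun hh => hsi (Fin.ext hh)
  have hvj : (s:ℕ) ≠ (j:ℕ) := fun hh => hsj (Fin.ext hh)
  have hs := s.isLt; have hj := j.isLt
  refine ⟨⟨if (s:ℕ) < (i:ℕ) then (s:ℕ) else if (s:ℕ) < (j:ℕ) then (s:ℕ)-1 else (s:ℕ)-2,
    by split_ifs <;> omega⟩, ?_⟩
  refine Fin.ext ?_
  rw [Eix_val]
  simp only
  split_ifs <;> omega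

end Aux

section Aux2

open Function

variable {g : Type*} [LieRing g] [LieAlgebra ℝ g]

theorem ceD_apply {k : ℕ} (α : AlternatingMap ℝ g ℝ (Fin (k+1))) (x : Fin (k+2) → g) :
    ceD g α x = ∑ i : Fin (k+2), ∑ j : Fin (k+2),
      if h : (i:ℕ) < (j:ℕ) then
        (-1:ℝ)^((i:ℕ)+(j:ℕ)) * α (Fin.cons ⁅x i, x j⁆ (fun r => x (Eix i j h r)))
      else 0 := by
  simp only [ceD]
  refine Finset.sum_congr rfl fun i _ => Finset.sum_congr rfl fun j _ => ?_
  by_cases h : (i:ℕ) < (j:ℕ)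
  · rw [dif_pos h, dif_pos h]
    refine congrArg (fun t : ℝ => (-1:ℝ)^((i:ℕ)+(j:ℕ)) * t) (congrArg α ?_)
    funext m
    refine Fin.cases ?_ ?_ m
    · rw [dif_pos (by simp), Fin.cons_zero]
    · intro r
      rw [dif_neg (by simp), Fin.cons_succ]
      congr 1
  · rw [dif_neg h, dif_neg h]

theorem cons_eq_update {k : ℕ} (w : Fin k → g) (z : g) :
    Fin.cons z w = Function.update (Fin.cons (0:g) w : Fin (k+1) → g) 0 z := by
  funext m
  refine Fin.cases ?_ ?_ m
  · simp
  · intro r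
    rw [Function.update_of_ne (Fin.succ_ne_zero r)]
    simp

theorem map_cons_add {k : ℕ} (α : AlternatingMap ℝ g ℝ (Fin (k+1))) (u v : g) (w : Fin k → g) :
    α (Fin.cons (u+v) w) = α (Fin.cons u w) + α (Fin.cons v w) := by
  rw [cons_eq_update w (u+v), cons_eq_update w u, cons_eq_update w v, α.map_update_add]

theorem map_cons_smul {k : ℕ} (α : AlternatingMap ℝ g ℝ (Fin (k+1))) (c : ℝ) (u : g) (w : Fin k → g) :
    α (Fin.cons (c • u) w) = c * α (Fin.cons u w) := by
  rw [cons_eq_update w (c • u), cons_eq_update w u, α.map_update_smul, smul_eq_mul]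

theorem ceD_update_add {n : ℕ} (α : AlternatingMap ℝ g ℝ (Fin n)) (x : Fin (n+1) → g)
    (s : Fin (n+1)) (a b : g) :
    ceD g α (Function.update x s (a+b)) =
      ceD g α (Function.update x s a) + ceD g α (Function.update x s b) := by
  cases n with
  | zero => simp [ceD]
  | succ k =>
    rw [ceD_apply, ceD_apply, ceD_apply, ← Finset.sum_add_distrib]
    refine Finset.sum_congr rfl fun i _ => ?_
    rw [← Finset.sum_add_distrib]
    refine Finset.sum_congr rfl fun j _ => ?_
    by_cases h : (i:ℕ) < (j:ℕ)
    · rw [dif_pos h, dif_pos h, dif_pos h]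
      have hji : j ≠ i := fun e => absurd h (by rw [e]; exact lt_irrefl _)
      have hij : i ≠ j := fun e => hji e.symm
      by_cases hsi : s = i
      · subst hsi
        have hw : ∀ c : g, (fun r => Function.update x s c (Eix s j h r)) =
            (fun r => x (Eix s j h r)) :=
          fun c => funext fun r => Function.update_of_ne (Eix_ne_left s j h r) _ _
        simp only [hw, Function.update_self, Function.update_of_ne hji]
        rw [add_lie, map_cons_add]
        ring
      · by_cases hsj : s = j
        · subst hsj
          have hw : ∀ c : g, (fun r => Function.update x s c (Eix i s h r)) =
              (fun r => x (Eix i s h r)) :=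
            fun c => funext fun r => Function.update_of_ne (Eix_ne_right i s h r) _ _
          have his : i ≠ s := hij
          simp only [hw, Function.update_self, Function.update_of_ne his]
          rw [lie_add, map_cons_add]
          ring
        · have his : i ≠ s := fun e => hsi e.symm
          have hjs : j ≠ s := fun e => hsj e.symm
          obtain ⟨r₀, hr₀⟩ := Eix_surj i j h s hsi hsj
          have hxe : ∀ c : g, (fun r => Function.update x s c (Eix i j h r)) =
              Function.update (fun r => x (Eix i j h r)) r₀ c := by
            intro c
            funext r
            by_cases hr : r = r₀
            · subst hr
              rw [hr₀, Function.update_self, Function.update_self]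
            · rw [Function.update_of_ne (fun e => hr (Eix_injective i j h (by rw [e, hr₀]))),
                Function.update_of_ne hr]
          simp only [hxe, Function.update_of_ne his, Function.update_of_ne hjs]
          rw [Fin.cons_update, Fin.cons_update, Fin.cons_update, α.map_update_add]
          ring
    · rw [dif_neg h, dif_neg h, dif_neg h]
      ring

theorem ceD_update_smul {n : ℕ} (α : AlternatingMap ℝ g ℝ (Fin n)) (x : Fin (n+1) → g)
    (s : Fin (n+1)) (c : ℝ) (a : g) :
    ceD g α (Function.update x s (c • a)) = c * ceD g α (Function.update x s a) := by
  cases n with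
  | zero => simp [ceD]
  | succ k =>
    rw [ceD_apply, ceD_apply, Finset.mul_sum]
    refine Finset.sum_congr rfl fun i _ => ?_
    rw [Finset.mul_sum]
    refine Finset.sum_congr rfl fun j _ => ?_
    by_cases h : (i:ℕ) < (j:ℕ)
    · rw [dif_pos h, dif_pos h]
      have hji : j ≠ i := fun e => absurd h (by rw [e]; exact lt_irrefl _)
      have hij : i ≠ j := fun e => hji e.symm
      by_cases hsi : s = i
      · subst hsi
        have hw : ∀ c : g, (fun r => Function.update x s c (Eix s j h r)) =
            (fun r => x (Eix s j h r)) :=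
          fun c => funext fun r => Function.update_of_ne (Eix_ne_left s j h r) _ _
        simp only [hw, Function.update_self, Function.update_of_ne hji]
        rw [smul_lie, map_cons_smul]
        ring
      · by_cases hsj : s = j
        · subst hsj
          have hw : ∀ c : g, (fun r => Function.update x s c (Eix i s h r)) =
              (fun r => x (Eix i s h r)) :=
            fun c => funext fun r => Function.update_of_ne (Eix_ne_right i s h r) _ _
          have his : i ≠ s := hij
          simp only [hw, Function.update_self, Function.update_of_ne his]
          rw [lie_smul, map_cons_smul]
          ring
        · have his : i ≠ s := fun e => hsi e.symm
          have hjs : j ≠ s := fun e => hsj e.symm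
          obtain ⟨r₀, hr₀⟩ := Eix_surj i j h s hsi hsj
          have hxe : ∀ c : g, (fun r => Function.update x s c (Eix i j h r)) =
              Function.update (fun r => x (Eix i j h r)) r₀ c := by
            intro c
            funext r
            by_cases hr : r = r₀
            · subst hr
              rw [hr₀, Function.update_self, Function.update_self]
            · rw [Function.update_of_ne (fun e => hr (Eix_injective i j h (by rw [e, hr₀]))),
                Function.update_of_ne hr]
          simp only [hxe, Function.update_of_ne his, Function.update_of_ne hjs]
          rw [Fin.cons_update, Fin.cons_update, α.map_update_smul, smul_eq_mul]
          ring
    · rw [dif_neg h, dif_neg h]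
      ring

end Aux2

section Aux3

open Function Module

theorem purify {V : Type*} [AddCommGroup V] [Module ℝ V] {N : ℕ} (T : Set V)
    (hT : ∀ v : V, v ∈ Submodule.span ℝ T)
    (f : (Fin N → V) → ℝ)
    (hadd : ∀ (u : Fin N → V) (s) (a b : V),
      f (Function.update u s (a+b)) = f (Function.update u s a) + f (Function.update u s b))
    (hsmul : ∀ (u : Fin N → V) (s) (c : ℝ) (a : V),
      f (Function.update u s (c • a)) = c * f (Function.update u s a))
    (h0 : ∀ u : Fin N → V, (∀ s, u s ∈ T) → f u = 0) :
    ∀ u, f u = 0 := by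
  suffices H : ∀ (Sl : Finset (Fin N)) (u : Fin N → V), (∀ s, s ∉ Sl → u s ∈ T) → f u = 0 by
    intro u
    exact H Finset.univ u (fun s hs => absurd (Finset.mem_univ s) hs)
  intro Sl
  induction Sl using Finset.induction with
  | empty => exact fun u hu => h0 u (fun s => hu s (Finset.notMem_empty s))
  | @insert t Sl ht IH =>
    intro u hu
    have key : ∀ z ∈ Submodule.span ℝ T, f (Function.update u t z) = 0 := by
      intro z hz
      induction hz using Submodule.span_induction with
      | mem z hzT =>
        refine IH _ (fun s hs => ?_)
        by_cases hst : s = t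
        · subst hst; rwa [Function.update_self]
        · rw [Function.update_of_ne hst]
          exact hu s (by simp [hst, hs])
      | zero =>
        have h00 : (0 : V) = (0:ℝ) • (0:V) := by simp
        rw [h00, hsmul]
        ring
      | add a b _ _ ha hb => rw [hadd, ha, hb]; ring
      | smul c a _ ha => rw [hsmul, ha]; ring
    have hkey := key (u t) (hT (u t))
    rwa [Function.update_eq_self] at hkey

theorem sum_update_eq_trace {V : Type*} [AddCommGroup V] [Module ℝ V] [FiniteDimensional ℝ V]
    {N : ℕ} (hdim : Module.finrank ℝ V = N) (ω : AlternatingMap ℝ V ℝ (Fin N))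
    (A : V →ₗ[ℝ] V) (u : Fin N → V) :
    ∑ m : Fin N, ω (Function.update u m (A (u m))) = (LinearMap.trace ℝ V A) * ω u := by
  classical
  set b : Basis (Fin N) ℝ V := Module.finBasisOfFinrankEq ℝ V hdim with hb
  have htr : LinearMap.trace ℝ V A = ∑ t : Fin N, b.repr (A (b t)) t := by
    rw [LinearMap.trace_eq_matrix_trace ℝ b, Matrix.trace]
    refine Finset.sum_congr rfl fun t _ => ?_
    rw [Matrix.diag_apply, LinearMap.toMatrix_apply]
  set f : (Fin N → V) → ℝ :=
    fun u => (∑ m : Fin N, ω (Function.update u m (A (u m)))) - (LinearMap.trace ℝ V A) * ω u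
    with hf
  have h1 : ∀ (u : Fin N → V) (s : Fin N) (z : V),
      (∑ m : Fin N, ω (Function.update (Function.update u s z) m
          (A (Function.update u s z m))))
        = ω (Function.update u s (A z)) +
          ∑ m ∈ Finset.univ.erase s,
            ω (Function.update (Function.update u m (A (u m))) s z) := by
    intro u s z
    rw [← Finset.add_sum_erase _ _ (Finset.mem_univ s)]
    congr 1
    · rw [Function.update_self, Function.update_idem]
    · refine Finset.sum_congr rfl fun m hm => ?_
      have hms : m ≠ s := Finset.ne_of_mem_erase hm
      rw [Function.update_of_ne hms, Function.update_comm hms]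
  have hsuff : ∀ u, f u = 0 := by
    refine purify (Set.range b) (fun v => by rw [b.span_eq]; trivial) f ?_ ?_ ?_
    · intro u s a c
      simp only [hf]
      rw [h1 (u := u) s (a+c), h1 (u := u) s a, h1 (u := u) s c]
      simp only [map_add, AlternatingMap.map_update_add, Finset.sum_add_distrib]
      ring
    · intro u s c a
      simp only [hf]
      rw [h1 (u := u) s (c • a), h1 (u := u) s a]
      simp only [map_smul, AlternatingMap.map_update_smul, smul_eq_mul, ← Finset.mul_sum]
      rw [Finset.mul_sum, ← Finset.mul_sum]
      ring
    · intro u hu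
      choose σ hσ using hu
      have hu' : ∀ s, u s = b (σ s) := fun s => (hσ s).symm
      simp only [hf]
      rw [sub_eq_zero]
      by_cases hinj : Function.Injective σ
      · have hbij : Function.Bijective σ := Finite.injective_iff_bijective.mp hinj
        have hAexp : ∀ m : Fin N,
            ω (Function.update u m (A (u m))) = b.repr (A (u m)) (σ m) * ω u := by
          intro m
          conv_lhs => rw [← b.sum_repr (A (u m))]
          rw [AlternatingMap.map_update_sum]
          rw [Finset.sum_eq_single (σ m)]
          · rw [AlternatingMap.map_update_smul, hσ m, Function.update_eq_self, smul_eq_mul]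
          · intro r _ hr
            rw [AlternatingMap.map_update_smul]
            obtain ⟨m', hm'⟩ := hbij.2 r
            have hm'm : m' ≠ m := fun e => hr (by rw [← hm', e])
            have hz : ω (Function.update u m (b r)) = 0 := by
              refine ω.map_eq_zero_of_eq _
                (?_ : Function.update u m (b r) m' = Function.update u m (b r) m) hm'm
              rw [Function.update_of_ne hm'm, Function.update_self, hu' m', hm']
            rw [hz, smul_zero]
          · intro hnotmem
            exact absurd (Finset.mem_univ _) hnotmem
        rw [Finset.sum_congr rfl (fun m _ => hAexp m), ← Finset.sum_mul]
        congr 1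
        have : ∀ m : Fin N, b.repr (A (u m)) (σ m) = b.repr (A (b (σ m))) (σ m) := by
          intro m; rw [← hu' m]
        rw [Finset.sum_congr rfl (fun m _ => this m),
          hbij.sum_comp (fun t => b.repr (A (b t)) t), htr]
      · obtain ⟨m1, m2, hσeq, hne⟩ : ∃ m1 m2, σ m1 = σ m2 ∧ m1 ≠ m2 := by
          simp only [Function.Injective, not_forall] at hinj
          obtain ⟨m1, m2, h1', h2'⟩ := hinj
          exact ⟨m1, m2, h1', h2'⟩
        have huu : u m1 = u m2 := by rw [hu' m1, hu' m2, hσeq]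
        have hωu : ω u = 0 := ω.map_eq_zero_of_eq u huu hne
        rw [hωu, mul_zero]
        have hz : ∀ m, m ≠ m1 → m ≠ m2 → ω (Function.update u m (A (u m))) = 0 := by
          intro m hm1 hm2
          refine ω.map_eq_zero_of_eq _
            (?_ : Function.update u m (A (u m)) m1 = Function.update u m (A (u m)) m2) hne
          rw [Function.update_of_ne (Ne.symm hm1), Function.update_of_ne (Ne.symm hm2), huu]
        have hpair : ω (Function.update u m1 (A (u m1))) +
            ω (Function.update u m2 (A (u m2))) = 0 := by
          have hcomp : Function.update u m1 (A (u m1)) =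
              (Function.update u m2 (A (u m2))) ∘ (Equiv.swap m1 m2) := by
            funext s
            simp only [Function.comp_apply]
            rcases eq_or_ne s m1 with rfl | hs1
            · rw [Equiv.swap_apply_left, Function.update_self, Function.update_self]
              exact congrArg A huu
            · rcases eq_or_ne s m2 with rfl | hs2
              · rw [Equiv.swap_apply_right, Function.update_of_ne hs1,
                  Function.update_of_ne hne]
                exact huu.symm
              · rw [Equiv.swap_apply_of_ne_of_ne hs1 hs2, Function.update_of_ne hs1,
                  Function.update_of_ne hs2]
          rw [hcomp, ω.map_swap _ hne]
          ring
        rw [← Finset.sum_filter_add_sum_filter_not Finset.univ (fun m => m = m1 ∨ m = m2)]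
        have hfil : Finset.univ.filter (fun m => m = m1 ∨ m = m2) = {m1, m2} := by
          ext m; simp
        rw [hfil, Finset.sum_pair hne, hpair, zero_add]
        refine Finset.sum_eq_zero fun m hm => ?_
        simp only [Finset.mem_filter, not_or] at hm
        exact hz m hm.2.1 hm.2.2
  have hfu := hsuff u
  simp only [hf] at hfu
  linarith
end Aux3

section Aux4

open Function Module

theorem hsign_aux (a b : ℕ) : (-1:ℝ)^(a+b) * (-1:ℝ)^a = (-1:ℝ)^b := by
  rw [pow_add, mul_comm ((-1:ℝ)^a) ((-1:ℝ)^b), mul_assoc, ← pow_add, ← two_mul, pow_mul]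
  norm_num

theorem map_cons_perm {g : Type*} [LieRing g] [LieAlgebra ℝ g] {k : ℕ}
    (α : AlternatingMap ℝ g ℝ (Fin (k+1))) (m : Fin (k+1)) (v : Fin (k+1) → g) :
    α (Fin.cons (v m) (fun r : Fin k => v (m.succAbove r))) = (-1:ℝ)^(m:ℕ) * α v := by
  have hcomp : Fin.cons (v m) (fun r : Fin k => v (m.succAbove r)) =
      v ∘ ⇑(Equiv.symm m.cycleRange) := by
    funext z
    refine Fin.cases ?_ ?_ z
    · rw [Fin.cons_zero, Function.comp_apply, Fin.cycleRange_symm_zero]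
    · intro r
      rw [Fin.cons_succ, Function.comp_apply, Fin.cycleRange_symm_succ]
  rw [hcomp, α.map_perm v (Equiv.symm m.cycleRange)]
  have hsg : Equiv.Perm.sign (Equiv.symm m.cycleRange) = (-1 : ℤˣ)^(m:ℕ) := by
    rw [Equiv.Perm.sign_symm, Fin.sign_cycleRange]
  rw [hsg]
  rcases Nat.even_or_odd (m:ℕ) with he | ho
  · rw [he.neg_one_pow, Even.neg_one_pow he, one_smul, one_mul]
  · rw [ho.neg_one_pow, Odd.neg_one_pow ho, Units.smul_def]
    simp

theorem ceD_vanish_aux (g : Type*) [LieRing g] [LieAlgebra ℝ g] [FiniteDimensional ℝ g]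
    (hunimod : ∀ x : g, LinearMap.trace ℝ g (LieAlgebra.ad ℝ g x) = 0)
    (n : ℕ) (p q : LieSubalgebra ℝ g)
    (hcompl : IsCompl p.toSubmodule q.toSubmodule)
    (hp : Module.finrank ℝ p.toSubmodule = n)
    (habq : ∀ x ∈ q, ∀ y ∈ q, ⁅x, y⁆ = (0 : g))
    (habp : ∀ x ∈ p, ∀ y ∈ p, ⁅x, y⁆ = (0 : g))
    (α : AlternatingMap ℝ g ℝ (Fin n))
    (hα : ∀ x : Fin n → g, (∃ i, x i ∈ q) → α x = 0) :
    ceD g α = 0 := by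
  classical
  cases n with
  | zero => rfl
  | succ k =>
    funext x0
    rw [Pi.zero_apply]
    revert x0
    -- projections
    set Pb : g →ₗ[ℝ] p.toSubmodule :=
      Submodule.linearProjOfIsCompl p.toSubmodule q.toSubmodule hcompl with hPb
    have hsubq : ∀ z : g, z - (Pb z : g) ∈ q.toSubmodule := by
      intro z
      have hh := Submodule.projection_add_projection_eq_self hcompl z
      have h2 : z - (Pb z : g) =
          ((Submodule.linearProjOfIsCompl q.toSubmodule p.toSubmodule hcompl.symm z :
            q.toSubmodule) : g) := (eq_sub_of_add_eq' hh).symm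
      rw [h2]; exact Submodule.coe_mem _
    have hconsP : ∀ (z : g) (v : Fin k → g),
        α (Fin.cons z v) = α (Fin.cons ((Pb z : g)) v) := by
      intro z v
      have hz : z = (Pb z : g) + (z - (Pb z : g)) := by abel
      have h2 : α (Fin.cons (z - (Pb z : g)) v) = 0 :=
        hα _ ⟨0, by rw [Fin.cons_zero]; exact hsubq z⟩
      conv_lhs => rw [hz]
      rw [map_cons_add, h2, add_zero]
    refine purify ((p.toSubmodule : Set g) ∪ (q.toSubmodule : Set g))
      (fun v => ?_) _ (fun u s a b => ceD_update_add α u s a b)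
      (fun u s c a => ceD_update_smul α u s c a) ?_
    · have hsp : Submodule.span ℝ ((p.toSubmodule : Set g) ∪ (q.toSubmodule : Set g)) = ⊤ := by
        rw [Submodule.span_union, Submodule.span_eq, Submodule.span_eq]
        exact codisjoint_iff.mp hcompl.codisjoint
      rw [hsp]; trivial
    intro x hx
    by_cases hallp : ∀ s, x s ∈ p.toSubmodule
    · rw [ceD_apply]
      refine Finset.sum_eq_zero fun i _ => Finset.sum_eq_zero fun j _ => ?_
      by_cases h : (i:ℕ) < (j:ℕ)
      · rw [dif_pos h]
        have hb : ⁅x i, x j⁆ = 0 := habp _ (hallp i) _ (hallp j)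
        have h0 : α (Fin.cons ⁅x i, x j⁆ fun r => x (Eix i j h r)) = 0 := by
          refine AlternatingMap.map_coord_zero α (0 : Fin (k+1)) ?_
          rw [Fin.cons_zero, hb]
        rw [h0, mul_zero]
      · rw [dif_neg h]
    · push_neg at hallp
      obtain ⟨s, hs⟩ := hallp
      have hsq : x s ∈ q.toSubmodule := (hx s).resolve_left hs
      by_cases htwo : ∃ s', s' ≠ s ∧ x s' ∉ p.toSubmodule
      · obtain ⟨s', hs's, hs'⟩ := htwo
        have hs'q : x s' ∈ q.toSubmodule := (hx s').resolve_left hs'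
        rw [ceD_apply]
        refine Finset.sum_eq_zero fun i _ => Finset.sum_eq_zero fun j _ => ?_
        by_cases h : (i:ℕ) < (j:ℕ)
        · rw [dif_pos h]
          by_cases hsij : s ≠ i ∧ s ≠ j
          · obtain ⟨r, hr⟩ := Eix_surj i j h s hsij.1 hsij.2
            have h0 : α (Fin.cons ⁅x i, x j⁆ fun r' => x (Eix i j h r')) = 0 :=
              hα _ ⟨r.succ, by rw [Fin.cons_succ, hr]; exact hsq⟩
            rw [h0, mul_zero]
          · by_cases hs'ij : s' ≠ i ∧ s' ≠ j
            · obtain ⟨r, hr⟩ := Eix_surj i j h s' hs'ij.1 hs'ij.2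
              have h0 : α (Fin.cons ⁅x i, x j⁆ fun r' => x (Eix i j h r')) = 0 :=
                hα _ ⟨r.succ, by rw [Fin.cons_succ, hr]; exact hs'q⟩
              rw [h0, mul_zero]
            · rw [not_and_or, not_ne_iff, not_ne_iff] at hsij hs'ij
              have hij : x i ∈ q.toSubmodule ∧ x j ∈ q.toSubmodule := by
                rcases hsij with rfl | rfl <;> rcases hs'ij with h' | h'
                · exact absurd (h' ▸ rfl) hs's
                · exact ⟨hsq, h' ▸ hs'q⟩
                · exact ⟨h' ▸ hs'q, hsq⟩
                · exact absurd (h' ▸ rfl) hs's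
              have hb : ⁅x i, x j⁆ = 0 := habq _ hij.1 _ hij.2
              have h0 : α (Fin.cons ⁅x i, x j⁆ fun r => x (Eix i j h r)) = 0 := by
                refine AlternatingMap.map_coord_zero α (0 : Fin (k+1)) ?_
                rw [Fin.cons_zero, hb]
              rw [h0, mul_zero]
        · rw [dif_neg h]
      · push_neg at htwo
        -- exactly one slot, namely s, lies outside p
        set w : Fin (k+1) → g := fun m => x (s.succAbove m) with hwdef
        have hwp : ∀ m, w m ∈ p.toSubmodule := fun m =>
          htwo _ (Fin.succAbove_ne s m)
        set wp : Fin (k+1) → p.toSubmodule := fun m => ⟨w m, hwp m⟩ with hwpdef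
        set Abar : p.toSubmodule →ₗ[ℝ] p.toSubmodule :=
          Pb ∘ₗ ((LieAlgebra.ad ℝ g (x s)) ∘ₗ p.toSubmodule.subtype) with hAbar
        set ω : AlternatingMap ℝ p.toSubmodule ℝ (Fin (k+1)) :=
          α.compLinearMap p.toSubmodule.subtype with homega
        set F : g →ₗ[ℝ] g :=
          p.toSubmodule.subtype ∘ₗ (Pb ∘ₗ (LieAlgebra.ad ℝ g (x s))) with hF
        -- the trace of Abar vanishes
        have htr0 : LinearMap.trace ℝ p.toSubmodule Abar = 0 := by
          rw [hAbar, LinearMap.trace_comp_comm']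
          have heq : ((LieAlgebra.ad ℝ g (x s)) ∘ₗ p.toSubmodule.subtype) ∘ₗ Pb =
              LieAlgebra.ad ℝ g (x s) := by
            apply LinearMap.ext
            intro z
            simp only [LinearMap.comp_apply, Submodule.coe_subtype, LieAlgebra.ad_apply]
            have h0 : ⁅x s, z - (Pb z : g)⁆ = 0 := habq _ hsq _ (hsubq z)
            rw [lie_sub] at h0
            exact (sub_eq_zero.mp h0).symm
          rw [heq]
          exact hunimod (x s)
        set T : Fin (k+2) → Fin (k+2) → ℝ := fun i j =>
          if h : (i:ℕ) < (j:ℕ) then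
            (-1:ℝ)^((i:ℕ)+(j:ℕ)) * α (Fin.cons ⁅x i, x j⁆ (fun r => x (Eix i j h r)))
          else 0 with hTdef
        have hvanish : ∀ i j, i ≠ s → j ≠ s → T i j = 0 := by
          intro i j hi hj
          rw [hTdef]
          by_cases h : (i:ℕ) < (j:ℕ)
          · simp only
            rw [dif_pos h]
            obtain ⟨r, hr⟩ := Eix_surj i j h s (Ne.symm hi) (Ne.symm hj)
            have h0 : α (Fin.cons ⁅x i, x j⁆ fun r' => x (Eix i j h r')) = 0 :=
              hα _ ⟨r.succ, by rw [Fin.cons_succ, hr]; exact hsq⟩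
            rw [h0, mul_zero]
          · simp only
            rw [dif_neg h]
        have hTss : T s s = 0 := by
          rw [hTdef]; simp only; rw [dif_neg (lt_irrefl _)]
        rw [ceD_apply]
        have hsplit : (∑ i : Fin (k+2), ∑ j : Fin (k+2), T i j) =
            ∑ t : Fin (k+2), (T s t + T t s) := by
          have h1 : ∀ i, i ≠ s → (∑ j : Fin (k+2), T i j) = T i s := by
            intro i hi
            rw [Finset.sum_eq_single s]
            · intro j _ hj
              exact hvanish i j hi hj
            · intro h
              exact absurd (Finset.mem_univ s) h
          rw [← Finset.add_sum_erase _ _ (Finset.mem_univ s),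
            Finset.sum_congr rfl (fun i hi => h1 i (Finset.ne_of_mem_erase hi)),
            Finset.sum_add_distrib]
          congr 1
          have h2 : (∑ t : Fin (k+2), T t s) =
              T s s + ∑ t ∈ Finset.univ.erase s, T t s :=
            (Finset.add_sum_erase _ _ (Finset.mem_univ s)).symm
          rw [h2, hTss, zero_add]
        rw [hsplit, Fin.sum_univ_succAbove (fun t => T s t + T t s) s, hTss, add_zero]
        have hterm : ∀ m : Fin (k+1), T s (s.succAbove m) + T (s.succAbove m) s =
            (-1:ℝ)^((s:ℕ)+1) * ω (Function.update wp m (Abar (wp m))) := by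
          intro m
          have hαω : α (Function.update w m (F (w m))) =
              ω (Function.update wp m (Abar (wp m))) := by
            rw [homega, AlternatingMap.compLinearMap_apply]
            refine congrArg α (funext fun r => ?_)
            by_cases hr : r = m
            · subst hr
              rw [Function.update_self, Function.update_self]
              rfl
            · rw [Function.update_of_ne hr, Function.update_of_ne hr]
              rfl
          have hts := sA_val s m
          have hVm : Function.update w m (F (w m)) m = F (x (s.succAbove m)) :=
            Function.update_self m (F (w m)) w
          by_cases hlt : (m:ℕ) < (s:ℕ)
          · -- t < s; only T t s survives
            have ht : ((s.succAbove m : Fin (k+2)) : ℕ) = (m:ℕ) := by rw [hts, if_pos hlt]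
            have h' : ((s.succAbove m : Fin (k+2)) : ℕ) < (s:ℕ) := by omega
            have hTst : T s (s.succAbove m) = 0 := by
              rw [hTdef]; simp only; rw [dif_neg (by omega)]
            have hidxA : ∀ r : Fin k, Eix (s.succAbove m) s h' r =
                s.succAbove (m.succAbove r) := by
              intro r
              refine Fin.ext ?_
              simp only [Eix_val, sA_val]
              split_ifs <;> omega
            have htuple : (Fin.cons (F (x (s.succAbove m)))
                (fun r : Fin k => x (Eix (s.succAbove m) s h' r)) : Fin (k+1) → g) =
                Fin.cons ((Function.update w m (F (w m))) m)
                  (fun r : Fin k => (Function.update w m (F (w m))) (m.succAbove r)) := by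
              funext z
              refine Fin.cases ?_ ?_ z
              · rw [Fin.cons_zero, Fin.cons_zero, hVm]
              · intro r
                rw [Fin.cons_succ, Fin.cons_succ,
                  Function.update_of_ne (Fin.succAbove_ne m r), hwdef]
                exact congrArg x (hidxA r)
            have hbr : (Pb ⁅x (s.succAbove m), x s⁆ : g) = -(F (x (s.succAbove m))) := by
              rw [← lie_skew (x (s.succAbove m)) (x s), map_neg]
              rfl
            rw [hTst, zero_add, hTdef]
            simp only
            rw [dif_pos h', hconsP, hbr]
            have hneg : (-(F (x (s.succAbove m)))) = (-1:ℝ) • (F (x (s.succAbove m))) := by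
              rw [neg_one_smul]
            rw [hneg, map_cons_smul, htuple, map_cons_perm, hαω]
            rw [ht]
            have hfin := hsign_aux (m:ℕ) (s:ℕ)
            calc (-1:ℝ)^((m:ℕ)+(s:ℕ)) *
                (-1 * ((-1:ℝ)^(m:ℕ) * ω (Function.update wp m (Abar (wp m)))))
                = ((-1:ℝ)^((m:ℕ)+(s:ℕ)) * (-1:ℝ)^(m:ℕ)) * (-1) *
                    ω (Function.update wp m (Abar (wp m))) := by ring
              _ = (-1:ℝ)^(s:ℕ) * (-1) * ω (Function.update wp m (Abar (wp m))) := by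
                  rw [hfin]
              _ = (-1:ℝ)^((s:ℕ)+1) * ω (Function.update wp m (Abar (wp m))) := by
                  rw [pow_succ]
          · -- t > s; only T s t survives
            have ht : ((s.succAbove m : Fin (k+2)) : ℕ) = (m:ℕ)+1 := by rw [hts, if_neg hlt]
            have h' : (s:ℕ) < ((s.succAbove m : Fin (k+2)) : ℕ) := by omega
            have hTts : T (s.succAbove m) s = 0 := by
              rw [hTdef]; simp only; rw [dif_neg (by omega)]
            have hidxB : ∀ r : Fin k, Eix s (s.succAbove m) h' r =
                s.succAbove (m.succAbove r) := by
              intro r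
              refine Fin.ext ?_
              simp only [Eix_val, sA_val]
              split_ifs <;> omega
            have htuple : (Fin.cons (F (x (s.succAbove m)))
                (fun r : Fin k => x (Eix s (s.succAbove m) h' r)) : Fin (k+1) → g) =
                Fin.cons ((Function.update w m (F (w m))) m)
                  (fun r : Fin k => (Function.update w m (F (w m))) (m.succAbove r)) := by
              funext z
              refine Fin.cases ?_ ?_ z
              · rw [Fin.cons_zero, Fin.cons_zero, hVm]
              · intro r
                rw [Fin.cons_succ, Fin.cons_succ,
                  Function.update_of_ne (Fin.succAbove_ne m r), hwdef]
                exact congrArg x (hidxB r)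
            have hbr : (Pb ⁅x s, x (s.succAbove m)⁆ : g) = F (x (s.succAbove m)) := rfl
            rw [hTts, add_zero, hTdef]
            simp only
            rw [dif_pos h', hconsP, hbr, htuple, map_cons_perm, hαω]
            rw [ht]
            have hfin := hsign_aux (m:ℕ) ((s:ℕ)+1)
            have hexp : (s:ℕ)+((m:ℕ)+1) = (m:ℕ)+((s:ℕ)+1) := by omega
            calc (-1:ℝ)^((s:ℕ)+((m:ℕ)+1)) *
                ((-1:ℝ)^(m:ℕ) * ω (Function.update wp m (Abar (wp m))))
                = ((-1:ℝ)^((m:ℕ)+((s:ℕ)+1)) * (-1:ℝ)^(m:ℕ)) *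
                    ω (Function.update wp m (Abar (wp m))) := by rw [hexp]; ring
              _ = (-1:ℝ)^((s:ℕ)+1) * ω (Function.update wp m (Abar (wp m))) := by
                  rw [hfin]
        rw [Finset.sum_congr rfl (fun m _ => hterm m), ← Finset.mul_sum,
          sum_update_eq_trace hp ω Abar wp, htr0, zero_mul, mul_zero, add_zero]

end Aux4

/-- On a `2n`-dimensional unimodular real Lie algebra with an
Abelian linear D-complex structure, the Chevalley–Eilenberg differential vanishes
on forms of type `(n,0)` and of type `(0,n)`. -/
theorem ceD_vanishes_on_pure_top_types
    (g : Type*) [LieRing g] [LieAlgebra ℝ g] [FiniteDimensional ℝ g]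
    (hunimod : ∀ x : g, LinearMap.trace ℝ g (LieAlgebra.ad ℝ g x) = 0)
    (n : ℕ) (hg : Module.finrank ℝ g = 2 * n)
    (p q : LieSubalgebra ℝ g)
    (hcompl : IsCompl p.toSubmodule q.toSubmodule)
    (hp : Module.finrank ℝ p.toSubmodule = n)
    (hq : Module.finrank ℝ q.toSubmodule = n)
    (habp : ∀ x ∈ p, ∀ y ∈ p, ⁅x, y⁆ = (0 : g))
    (habq : ∀ x ∈ q, ∀ y ∈ q, ⁅x, y⁆ = (0 : g)) :
    (∀ α : AlternatingMap ℝ g ℝ (Fin n),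
        (∀ x : Fin n → g, (∃ i, x i ∈ q) → α x = 0) → ceD g α = 0) ∧
    (∀ α : AlternatingMap ℝ g ℝ (Fin n),
        (∀ x : Fin n → g, (∃ i, x i ∈ p) → α x = 0) → ceD g α = 0) := by
  constructor
  · intro α hα
    exact ceD_vanish_aux g hunimod n p q hcompl hp habq habp α hα
  · intro α hα
    exact ceD_vanish_aux g hunimod n q p hcompl.symm hq habp habq α hα

end
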